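/- Let Ỹ be the n×n complex matrix whose first row is (x_1, x_2, ..., x_{n−1}, y_0), whose last column is (y_0, y_1, ..., y_{n−1})ᵀ, whose subdiagonal entries Ỹ_{i+1,i} equal 1 for 1 ≤ i ≤ n−1, and whose all other entries are 0. Write det(tI − Ỹ) = a_0 + a_1 t + ... + a_{n−1} t^{n−1} + t^n. Then for all 1 ≤ i ≤ n, a_{n−i} = −x_i − y_{n−i} + Σ_{j=1}^{i−1} x_j y_{n−i+j}, where x_n is set to 0. -/

import Mathlib

open Matrix Polynomial Finset


noncomputable def pp (x : ℕ → ℂ) (m : ℕ) : Polynomial ℂ :=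
  X ^ m - ∑ j ∈ Finset.range m, C (x (j+1)) * X ^ (m - 1 - j)

lemma pp_zero (x : ℕ → ℂ) : pp x 0 = 1 := by simp [pp]

lemma pp_succ (x : ℕ → ℂ) (m : ℕ) : pp x (m+1) = X * pp x m - C (x (m+1)) := by
  unfold pp
  rw [Finset.sum_range_succ, mul_sub, Finset.mul_sum]
  have h1 : ∀ j ∈ Finset.range m, X * (C (x (j+1)) * X ^ (m - 1 - j)) = C (x (j+1)) * X ^ (m + 1 - 1 - j) := by
    intro j hj
    simp only [Finset.mem_range] at hj
    have : m + 1 - 1 - j = (m - 1 - j) + 1 := by omega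
    rw [this, pow_succ]; ring
  rw [Finset.sum_congr rfl h1]
  have : m + 1 - 1 - m = 0 := by omega
  rw [this, pow_zero, mul_one, pow_succ]
  ring

lemma pp_coeff_lt (x : ℕ → ℂ) (m d : ℕ) (h : d < m) : (pp x m).coeff d = -(x (m - d)) := by
  simp only [pp, coeff_sub, finset_sum_coeff, coeff_C_mul, coeff_X_pow]
  rw [if_neg (by omega)]
  rw [Finset.sum_eq_single (m - 1 - d)]
  · rw [if_pos (by omega)]
    have : m - 1 - d + 1 = m - d := by omega
    rw [this]; ring
  · intro b hb hne
    simp only [Finset.mem_range] at hb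
    rw [if_neg (by omega)]; ring
  · intro hab
    simp only [Finset.mem_range] at hab
    omega

lemma pp_coeff_self (x : ℕ → ℂ) (m : ℕ) : (pp x m).coeff m = 1 := by
  simp only [pp, coeff_sub, finset_sum_coeff, coeff_C_mul, coeff_X_pow, if_pos rfl, if_true]
  rw [Finset.sum_eq_zero, sub_zero]
  intro b hb
  simp only [Finset.mem_range] at hb
  rw [if_neg (by omega)]; ring

lemma pp_coeff_gt (x : ℕ → ℂ) (m d : ℕ) (h : m < d) : (pp x m).coeff d = 0 := by
  simp only [pp, coeff_sub, finset_sum_coeff, coeff_C_mul, coeff_X_pow]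
  rw [if_neg (by omega), Finset.sum_eq_zero, sub_zero]
  intro b hb
  simp only [Finset.mem_range] at hb
  rw [if_neg (by omega)]; ring


noncomputable def Gmat (m : ℕ) (r z : ℕ → Polynomial ℂ) : Matrix (Fin m) (Fin m) (Polynomial ℂ) :=
  Matrix.of fun i j =>
    if (i : ℕ) = 0 then r j
    else if (j : ℕ) + 1 = (i : ℕ) then -1
    else if (j : ℕ) = m - 1 then z i
    else 0

lemma Gdet : ∀ (m : ℕ), 0 < m → ∀ (r z : ℕ → Polynomial ℂ),
    (Gmat m r z).det = (∑ k ∈ Finset.range (m-1), r k * z (k+1)) + r (m-1) := by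
  intro m
  induction m with
  | zero => intro h; omega
  | succ m' ih =>
    intro _ r z
    match m', ih with
    | 0, _ =>
      simp [Gmat, Matrix.det_fin_one]
    | Nat.succ m'', ih =>
      rw [Matrix.det_succ_column_zero, Fin.sum_univ_succ, Fin.sum_univ_succ]
      have htail : ∀ i : Fin m'',
          (-1 : Polynomial ℂ) ^ ((i.succ.succ : Fin (m''+1+1)) : ℕ) * (Gmat (m''+1+1) r z) i.succ.succ 0 *
            (((Gmat (m''+1+1) r z).submatrix (i.succ.succ).succAbove Fin.succ).det) = 0 := by
        intro i
        have h0 : (Gmat (m''+1+1) r z) i.succ.succ 0 = 0 := by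
          simp only [Gmat, Matrix.of_apply, Fin.val_succ, Fin.val_zero]
          split_ifs <;> first | rfl | omega | (simp_all; omega) | simp_all
        rw [h0]; ring
      rw [Finset.sum_eq_zero (fun i _ => htail i), add_zero]
      have e0 : (Gmat (m''+1+1) r z) 0 0 = r 0 := by simp [Gmat]
      have hv1 : ((1 : Fin (m''+1+1)) : ℕ) = 1 := rfl
      have e1 : (Gmat (m''+1+1) r z) 1 0 = -1 := by
        simp [Gmat]
      have m00 : (Gmat (m''+1+1) r z).submatrix (0 : Fin (m''+1+1)).succAbove Fin.succ
          = Gmat (m''+1) (fun k => if k = m''+1 - 1 then z 1 else 0) (fun i => z (i+1)) := by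
        apply Matrix.ext; intro i j
        have hj : (j : ℕ) < m''+1 := j.isLt
        have hi : (i : ℕ) < m''+1 := i.isLt
        simp only [Matrix.submatrix_apply, Fin.succAbove_zero, Gmat, Matrix.of_apply, Fin.val_succ]
        split_ifs <;> first | rfl | omega | (congr 1; omega) | (exfalso; omega) | exact False.elim (by assumption)
      have m10 : (Gmat (m''+1+1) r z).submatrix (1 : Fin (m''+1+1)).succAbove Fin.succ
          = Gmat (m''+1) (fun k => r (k+1)) (fun i => z (i+1)) := by
        apply Matrix.ext; intro i j
        have hj : (j : ℕ) < m''+1 := j.isLt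
        have hi : (i : ℕ) < m''+1 := i.isLt
        have hv : (((1 : Fin (m''+1+1)).succAbove i : Fin (m''+1+1)) : ℕ)
            = if (i : ℕ) < 1 then (i : ℕ) else (i : ℕ) + 1 := by
          rcases lt_or_ge (Fin.castSucc i) (1 : Fin (m''+1+1)) with h | h
          · rw [Fin.succAbove_of_castSucc_lt _ _ h]
            have : (i : ℕ) < 1 := by simpa [Fin.lt_def, hv1] using h
            simp [this]
          · rw [Fin.succAbove_of_le_castSucc _ _ h]
            have : ¬ (i : ℕ) < 1 := by
              simp only [Fin.le_def, hv1, Fin.coe_castSucc] at h; omega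
            simp [this]
        simp only [Matrix.submatrix_apply, Gmat, Matrix.of_apply, Fin.val_succ, hv]
        by_cases h0 : (i : ℕ) < 1
        · simp only [if_pos h0]
          split_ifs <;> first | rfl | omega | (congr 1; omega) | (exfalso; omega) | exact False.elim (by assumption)
        · simp only [if_neg h0]
          split_ifs <;> first | rfl | omega | (congr 1; omega) | (exfalso; omega) | exact False.elim (by assumption)
      simp only [Fin.succ_zero_eq_one, Nat.succ_eq_add_one]
      rw [e0, e1, m00, m10, ih (Nat.succ_pos _), ih (Nat.succ_pos _)]
      simp only [Nat.succ_eq_add_one, Nat.add_sub_cancel, Fin.val_zero, Fin.val_one, pow_zero,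
        pow_one, if_pos rfl]
      have hz1 : (∑ k ∈ Finset.range m'', (if k = m'' then z 1 else (0:Polynomial ℂ)) * z (k+1+1))
          = 0 := by
        apply Finset.sum_eq_zero
        intro k hk
        simp only [Finset.mem_range] at hk
        rw [if_neg (by omega)]; ring
      rw [hz1]
      have hre : (∑ k ∈ Finset.range (m''+1), r k * z (k+1))
          = r 0 * z 1 + ∑ k ∈ Finset.range m'', r (k+1) * z (k+1+1) := by
        rw [Finset.sum_range_succ']
        ring
      rw [hre]
      simp only [if_true]
      ring


noncomputable def Vmat (n : ℕ) : Matrix (Fin n) (Fin n) (Polynomial ℂ) :=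
  Matrix.of fun j k => (if j = k then 1 else 0) - (if (k : ℕ) = (j : ℕ) + 1 then X else 0)

lemma Vdet (n : ℕ) : (Vmat n).det = 1 := by
  have h : (Vmat n).BlockTriangular id := by
    intro i j hij
    simp only [id] at hij
    simp only [Vmat, Matrix.of_apply]
    rw [if_neg (by exact fun h => absurd h (ne_of_gt hij)), if_neg (by
      intro h
      have := Fin.lt_def.mp hij
      omega)]
    ring
  rw [Matrix.det_of_upperTriangular h]
  apply Finset.prod_eq_one
  intro i _
  show (if i = i then (1:Polynomial ℂ) else 0) - (if (i:ℕ) = (i:ℕ)+1 then X else 0) = 1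
  rw [if_pos rfl, if_neg (by omega)]
  ring

lemma mulV (n : ℕ) (G : Matrix (Fin n) (Fin n) (Polynomial ℂ)) (i k : Fin n) :
    (G * Vmat n) i k = G i k - (if h : 1 ≤ (k : ℕ) then G i ⟨(k : ℕ) - 1, by omega⟩ * X else 0) := by
  rw [Matrix.mul_apply]
  have : ∀ j : Fin n, G i j * Vmat n j k
      = (if j = k then G i j else 0) - (if (k:ℕ) = (j:ℕ)+1 then G i j * X else 0) := by
    intro j
    simp only [Vmat, Matrix.of_apply]
    split_ifs <;> ring
  rw [Finset.sum_congr rfl (fun j _ => this j), Finset.sum_sub_distrib,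
    Finset.sum_ite_eq' Finset.univ k (fun j => G i j), if_pos (Finset.mem_univ k)]
  congr 1
  by_cases hk : 1 ≤ (k : ℕ)
  · rw [dif_pos hk, Finset.sum_eq_single (⟨(k:ℕ)-1, by omega⟩ : Fin n)]
    · rw [if_pos (by simp; omega)]
    · intro b _ hb
      rw [if_neg (by
        intro h
        apply hb
        apply Fin.ext
        simp; omega)]
    · intro h; exact absurd (Finset.mem_univ _) h
  · rw [dif_neg hk]
    apply Finset.sum_eq_zero
    intro j _
    rw [if_neg (by omega)]

lemma fin_val_mk (n a : ℕ) (h : a < n) : ((⟨a, h⟩ : Fin n) : ℕ) = a := rfl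

lemma keymat (n : ℕ) (hn : 0 < n) (x y : ℕ → ℂ) (hxn : x n = 0)
    (Y : Matrix (Fin n) (Fin n) ℂ)
    (hY : ∀ i j : Fin n, Y i j =
      if (j : ℕ) = n - 1 then y i
      else if (i : ℕ) = 0 then x ((j : ℕ) + 1)
      else if (i : ℕ) = (j : ℕ) + 1 then 1
      else 0) :
    Matrix.charmatrix Y
      = Gmat n (fun k => pp x (k+1) - (if k = n-1 then C (y 0) else 0))
          (fun i => -C (y i)) * Vmat n := by
  apply Matrix.ext; intro i k
  rw [mulV, Matrix.charmatrix_apply, Matrix.diagonal_apply]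
  simp only [Gmat, Matrix.of_apply, fin_val_mk]
  have hkn : (k:ℕ) < n := k.isLt
  have hin : (i:ℕ) < n := i.isLt
  have hik' : i = k ↔ (i:ℕ) = (k:ℕ) := Fin.ext_iff
  by_cases hi0 : (i:ℕ) = 0
  · by_cases hk1 : 1 ≤ (k:ℕ)
    · rw [dif_pos hk1]
      rw [if_pos hi0, if_pos hi0]
      rw [if_neg (show ¬((k:ℕ)-1 = n-1) by omega), sub_zero,
        show (k:ℕ)-1+1 = (k:ℕ) by omega, pp_succ]
      rw [if_neg (show ¬ i = k from fun h => by rw [hik'] at h; omega)]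
      by_cases hkn1 : (k:ℕ) = n-1
      · have hv : Y i k = y 0 := by rw [hY, if_pos hkn1, hi0]
        rw [hv, if_pos hkn1, show (k:ℕ)+1 = n by omega, hxn, Polynomial.C_0]
        ring
      · have hv : Y i k = x ((k:ℕ)+1) := by rw [hY, if_neg hkn1, if_pos hi0]
        rw [hv, if_neg hkn1]
        ring
    · rw [dif_neg hk1, sub_zero, if_pos hi0]
      rw [if_pos (show i = k from Fin.ext (by omega))]
      rw [show (k:ℕ)+1 = 0+1 by omega, pp_succ, pp_zero]
      by_cases hkn1 : (k:ℕ) = n-1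
      · have hv : Y i k = y 0 := by rw [hY, if_pos hkn1, hi0]
        have hx : x (0+1) = 0 := by rw [show 0+1 = n by omega]; exact hxn
        rw [hv, if_pos hkn1, hx, Polynomial.C_0]
        ring
      · have hv : Y i k = x (0+1) := by
          rw [hY, if_neg hkn1, if_pos hi0, show (k:ℕ)+1 = 0+1 by omega]
        rw [hv, if_neg hkn1]
        ring
  · by_cases hk1 : 1 ≤ (k:ℕ)
    · rw [dif_pos hk1, if_neg hi0, if_neg hi0,
        if_neg (show ¬((k:ℕ)-1 = n-1) by omega), show (k:ℕ)-1+1 = (k:ℕ) by omega]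
      by_cases h1 : (k:ℕ)+1 = (i:ℕ)
      · rw [if_pos h1, if_neg (show ¬((k:ℕ) = (i:ℕ)) by omega),
          if_neg (show ¬ i = k from fun h => by rw [hik'] at h; omega)]
        have hv : Y i k = 1 := by
          rw [hY, if_neg (show ¬((k:ℕ) = n-1) by omega), if_neg hi0, if_pos (by omega)]
        rw [hv, Polynomial.C_1]
        ring
      · rw [if_neg h1]
        by_cases h2 : (k:ℕ) = (i:ℕ)
        · rw [if_pos h2, if_pos (show i = k from Fin.ext (by omega))]
          by_cases hkn1 : (k:ℕ) = n-1
          · have hv : Y i k = y (i:ℕ) := by rw [hY, if_pos hkn1]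
            rw [hv, if_pos hkn1]; ring
          · have hv : Y i k = 0 := by
              rw [hY, if_neg hkn1, if_neg hi0, if_neg (by omega)]
            rw [hv, if_neg hkn1, Polynomial.C_0]; ring
        · rw [if_neg h2, if_neg (show ¬ i = k from fun h => by rw [hik'] at h; omega)]
          by_cases hkn1 : (k:ℕ) = n-1
          · have hv : Y i k = y (i:ℕ) := by rw [hY, if_pos hkn1]
            rw [hv, if_pos hkn1]; ring
          · have hv : Y i k = 0 := by
              rw [hY, if_neg hkn1, if_neg hi0, if_neg (by omega)]
            rw [hv, if_neg hkn1, Polynomial.C_0]; ring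
    · rw [dif_neg hk1, sub_zero, if_neg hi0]
      have hkn1 : ¬((k:ℕ) = n-1) := by omega
      rw [if_neg (show ¬ i = k from fun h => by rw [hik'] at h; omega)]
      by_cases h1 : (k:ℕ)+1 = (i:ℕ)
      · rw [if_pos h1]
        have hv : Y i k = 1 := by rw [hY, if_neg hkn1, if_neg hi0, if_pos (by omega)]
        rw [hv, Polynomial.C_1]; ring
      · rw [if_neg h1, if_neg hkn1]
        have hv : Y i k = 0 := by rw [hY, if_neg hkn1, if_neg hi0, if_neg (by omega)]
        rw [hv, Polynomial.C_0]; ring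


theorem stmt2 (n : ℕ) (hn : 0 < n) (x y : ℕ → ℂ) (hxn : x n = 0)
    (Y : Matrix (Fin n) (Fin n) ℂ)
    (hY : ∀ i j : Fin n, Y i j =
      if (j : ℕ) = n - 1 then y i
      else if (i : ℕ) = 0 then x ((j : ℕ) + 1)
      else if (i : ℕ) = (j : ℕ) + 1 then 1
      else 0) :
    ∀ i : ℕ, 1 ≤ i → i ≤ n →
      (Matrix.charpoly Y).coeff (n - i) =
        -x i - y (n - i) + ∑ j ∈ Finset.Ico 1 i, x j * y (n - i + j) := by
  have hchar : Matrix.charpoly Y =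
      (∑ k ∈ Finset.range (n-1), pp x (k+1) * (-C (y (k+1)))) + (pp x n - C (y 0)) := by
    have h0 : Matrix.charpoly Y = (Matrix.charmatrix Y).det := rfl
    rw [h0, keymat n hn x y hxn Y hY, Matrix.det_mul, Vdet, mul_one, Gdet n hn]
    congr 1
    · apply Finset.sum_congr rfl
      intro k hk
      simp only [Finset.mem_range] at hk
      rw [if_neg (by omega), sub_zero]
    · rw [if_pos rfl, show (n-1)+1 = n by omega]
  intro i hi1 hi2
  have hni : n - i < n := by omega
  rw [hchar, Polynomial.coeff_add, Polynomial.coeff_sub, Polynomial.finset_sum_coeff]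
  have hppn : (pp x n).coeff (n-i) = -(x i) := by
    rw [pp_coeff_lt x n (n-i) hni, show n-(n-i) = i by omega]
  rw [hppn, Polynomial.coeff_C]
  have hterm : ∀ k, (pp x (k+1) * (-C (y (k+1)))).coeff (n-i)
      = -(y (k+1) * (pp x (k+1)).coeff (n-i)) := by
    intro k
    rw [show pp x (k+1) * (-C (y (k+1))) = -(C (y (k+1)) * pp x (k+1)) by ring,
      Polynomial.coeff_neg, Polynomial.coeff_C_mul]
  rw [Finset.sum_congr rfl (fun k _ => hterm k), Finset.sum_neg_distrib]
  by_cases hin : i = n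
  · have h0 : n - i = 0 := by omega
    rw [h0, if_pos rfl]
    have hS : ∑ k ∈ Finset.range (n-1), y (k+1) * (pp x (k+1)).coeff 0
        = -∑ j ∈ Finset.Ico 1 i, x j * y (0 + j) := by
      have h1 : ∀ k ∈ Finset.range (n-1), y (k+1) * (pp x (k+1)).coeff 0
          = -(x (k+1) * y (0 + (k+1))) := by
        intro k hk
        rw [pp_coeff_lt x (k+1) 0 (by omega), show (k+1) - 0 = k+1 by omega,
          show 0 + (k+1) = k+1 by omega]
        ring
      rw [Finset.sum_congr rfl h1, Finset.sum_neg_distrib]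
      congr 1
      rw [Finset.sum_Ico_eq_sum_range, show i - 1 = n - 1 by omega]
      apply Finset.sum_congr rfl
      intro k _
      rw [show 1 + k = k + 1 by omega]
    rw [hS]
    ring
  · rw [if_neg (by omega)]
    have hS : ∑ k ∈ Finset.range (n-1), y (k+1) * (pp x (k+1)).coeff (n-i)
        = y (n-i) - ∑ j ∈ Finset.Ico 1 i, x j * y (n-i+j) := by
      rw [Finset.range_eq_Ico,
        ← Finset.sum_Ico_consecutive (fun k => y (k+1) * (pp x (k+1)).coeff (n-i))
          (show 0 ≤ n-i-1 by omega) (show n-i-1 ≤ n-1 by omega)]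
      have hz : ∑ k ∈ Finset.Ico 0 (n-i-1), y (k+1) * (pp x (k+1)).coeff (n-i) = 0 := by
        apply Finset.sum_eq_zero
        intro k hk
        simp only [Finset.mem_Ico] at hk
        rw [pp_coeff_gt x (k+1) (n-i) (by omega)]
        ring
      rw [hz, zero_add, Finset.sum_eq_sum_Ico_succ_bot (show n-i-1 < n-1 by omega)]
      rw [show n-i-1+1 = n-i by omega, pp_coeff_self]
      have hrest : ∑ k ∈ Finset.Ico (n-i) (n-1), y (k+1) * (pp x (k+1)).coeff (n-i)
          = -∑ j ∈ Finset.Ico 1 i, x j * y (n-i+j) := by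
        have h1 : ∀ k ∈ Finset.Ico (n-i) (n-1), y (k+1) * (pp x (k+1)).coeff (n-i)
            = -(x (k+1-(n-i)) * y (k+1)) := by
          intro k hk
          simp only [Finset.mem_Ico] at hk
          rw [pp_coeff_lt x (k+1) (n-i) (by omega)]
          ring
        rw [Finset.sum_congr rfl h1, Finset.sum_neg_distrib]
        congr 1
        apply Finset.sum_nbij' (fun k => k + 1 - (n-i)) (fun j => n - i + j - 1)
        · intro a ha
          simp only [Finset.mem_Ico] at ha ⊢
          omega
        · intro a ha
          simp only [Finset.mem_Ico] at ha ⊢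
          omega
        · intro a ha
          simp only [Finset.mem_Ico] at ha
          omega
        · intro a ha
          simp only [Finset.mem_Ico] at ha
          omega
        · intro a ha
          simp only [Finset.mem_Ico] at ha
          rw [show n - i + (a + 1 - (n-i)) = a + 1 by omega]
      rw [hrest]
      ring
    rw [hS]
    ring
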